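/- arXiv:1301.6752 — 4 statements merged into one kernel-verified Lean document; each statement's English description precedes it below -/
import Mathlib

section
/- Let A ∈ ℂ^{m×p}, B ∈ ℂ^{q×m} and let C ∈ ℂ^{m×m} be Hermitian. Put M = [E_A, F_B] ∈ ℂ^{m×2m}. Then there exists a matrix X ∈ ℂ^{p×q} such that AXB is Hermitian and AXB ⪰ C if and only if M*CM ⪯ 0 and ℛ(M*CM) = ℛ(M*C). -/
open Matrix ComplexOrder

/-- The matrix of the orthogonal projection of `ℂ^m` onto the subspace `U`. -/
noncomputable def projMat {m : ℕ} (U : Submodule ℂ (EuclideanSpace ℂ (Fin m))) :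
    Matrix (Fin m) (Fin m) ℂ :=
  Matrix.toEuclideanLin.symm (U.subtype ∘ₗ (U.orthogonalProjectionOnto).toLinearMap)

/-- `E_A`: orthogonal projection onto the orthogonal complement of the column space of `A`. -/
noncomputable def eProj {m p : ℕ} (A : Matrix (Fin m) (Fin p) ℂ) : Matrix (Fin m) (Fin m) ℂ :=
  projMat (LinearMap.range (Matrix.toEuclideanLin A))ᗮ

/-- `F_B`: orthogonal projection onto the kernel of `B`. -/
noncomputable def fProj {q m : ℕ} (B : Matrix (Fin q) (Fin m) ℂ) : Matrix (Fin m) (Fin m) ℂ :=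
  projMat (LinearMap.ker (Matrix.toEuclideanLin B))

/-- `i₊`: the number of positive eigenvalues of a Hermitian matrix, with multiplicity. -/
noncomputable def iPos {ι : Type} [Fintype ι] [DecidableEq ι] (A : Matrix ι ι ℂ) : ℕ :=
  if h : A.IsHermitian then Nat.card {i : ι // 0 < h.eigenvalues i} else 0

/-- `i₋`: the number of negative eigenvalues of a Hermitian matrix, with multiplicity. -/
noncomputable def iNeg {ι : Type} [Fintype ι] [DecidableEq ι] (A : Matrix ι ι ℂ) : ℕ :=
  if h : A.IsHermitian then Nat.card {i : ι // h.eigenvalues i < 0} else 0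

section Helpers

variable {l n k : Type} [Fintype l] [Fintype n] [Fintype k]
  [DecidableEq l] [DecidableEq n] [DecidableEq k]

set_option linter.unusedSectionVars false

lemma toEuclideanLin_mul (A : Matrix l n ℂ) (B : Matrix n k ℂ) :
    Matrix.toEuclideanLin (A * B) = (Matrix.toEuclideanLin A) ∘ₗ (Matrix.toEuclideanLin B) := by
  apply LinearMap.ext; intro x
  simp [Matrix.toEuclideanLin_apply, LinearMap.comp_apply, Matrix.mulVec_mulVec]

lemma toEuclideanLin_one : Matrix.toEuclideanLin (1 : Matrix n n ℂ) = LinearMap.id := by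
  apply LinearMap.ext; intro x
  simp [Matrix.toEuclideanLin_apply]

lemma mem_range_toEuclideanLin_iff (A : Matrix l n ℂ) (x : l → ℂ) :
    (WithLp.equiv 2 (l → ℂ)).symm x ∈ LinearMap.range (Matrix.toEuclideanLin A) ↔
      x ∈ LinearMap.range A.mulVecLin := by
  constructor
  · rintro ⟨y, hy⟩
    refine ⟨WithLp.equiv 2 (n → ℂ) y, ?_⟩
    have := congrArg (WithLp.equiv 2 (l → ℂ)) hy
    simpa [Matrix.ofLp_toEuclideanLin_apply] using this
  · rintro ⟨y, hy⟩
    refine ⟨(WithLp.equiv 2 (n → ℂ)).symm y, ?_⟩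
    simp [Matrix.toEuclideanLin_apply]
    simpa using hy

lemma exists_eq_mul_of_forall_col (A : Matrix l n ℂ) (N : Matrix l k ℂ)
    (h : ∀ j, (fun i => N i j) ∈ LinearMap.range A.mulVecLin) : ∃ G : Matrix n k ℂ, A * G = N := by
  choose g hg using h
  refine ⟨Matrix.of fun i j => g j i, ?_⟩
  ext i j
  have h1 : (A * Matrix.of fun i j => g j i) i j = (A *ᵥ g j) i := by
    simp [Matrix.mul_apply, Matrix.mulVec, dotProduct]
  rw [h1]
  have := hg j
  rw [Matrix.mulVecLin_apply] at this
  rw [this]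

lemma exists_eq_mul_of_range_le (A : Matrix l n ℂ) (N : Matrix l k ℂ)
    (h : LinearMap.range (Matrix.toEuclideanLin N) ≤ LinearMap.range (Matrix.toEuclideanLin A)) :
    ∃ G : Matrix n k ℂ, A * G = N := by
  apply exists_eq_mul_of_forall_col
  intro j
  rw [← mem_range_toEuclideanLin_iff]
  have : (fun i => N i j) = N *ᵥ Pi.single j 1 := by
    rw [Matrix.mulVec_single_one]; rfl
  rw [this]
  have h2 : (WithLp.equiv 2 (l → ℂ)).symm (N *ᵥ Pi.single j 1) =
      Matrix.toEuclideanLin N ((WithLp.equiv 2 (k → ℂ)).symm (Pi.single j 1)) := by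
    simp [Matrix.toEuclideanLin_apply]
  rw [h2]
  exact h ⟨_, rfl⟩

lemma range_mulVecLin_mul_le (A : Matrix l n ℂ) (B : Matrix n k ℂ) :
    LinearMap.range (A * B).mulVecLin ≤ LinearMap.range A.mulVecLin := by
  rw [Matrix.mulVecLin_mul]
  exact LinearMap.range_comp_le_range _ _

lemma range_mulVecLin_neg (A : Matrix l n ℂ) :
    LinearMap.range (-A).mulVecLin = LinearMap.range A.mulVecLin := by
  ext x
  constructor
  · rintro ⟨y, rfl⟩
    exact ⟨-y, by simp [Matrix.mulVecLin_apply, Matrix.neg_mulVec, Matrix.mulVec_neg]⟩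
  · rintro ⟨y, rfl⟩
    exact ⟨-y, by simp [Matrix.mulVecLin_apply, Matrix.neg_mulVec, Matrix.mulVec_neg]⟩

lemma range_conjTranspose_mul_self (N : Matrix l n ℂ) :
    LinearMap.range (Nᴴ * N).mulVecLin = LinearMap.range Nᴴ.mulVecLin := by
  apply Submodule.eq_of_le_of_finrank_le
  · rw [Matrix.mulVecLin_mul]; exact LinearMap.range_comp_le_range _ _
  · have h1 : (Nᴴ * N).rank = Nᴴ.rank := by
      rw [Matrix.rank_conjTranspose_mul_self, Matrix.rank_conjTranspose]
    simp only [Matrix.rank] at h1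
    omega

end Helpers

section ProjHelpers

variable {m : ℕ} (U : Submodule ℂ (EuclideanSpace ℂ (Fin m)))

lemma toEuclideanLin_projMat :
    Matrix.toEuclideanLin (projMat U) = U.subtype ∘ₗ (U.orthogonalProjectionOnto).toLinearMap :=
  Matrix.toEuclideanLin.apply_symm_apply _

lemma projMat_apply (x : EuclideanSpace ℂ (Fin m)) :
    Matrix.toEuclideanLin (projMat U) x = (U.orthogonalProjectionOnto x : EuclideanSpace ℂ (Fin m)) := by
  rw [toEuclideanLin_projMat]; rfl

lemma projMat_isHermitian : (projMat U).IsHermitian := by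
  rw [Matrix.isHermitian_iff_isSymmetric, toEuclideanLin_projMat]
  exact U.starProjection_isSymmetric

lemma projMat_mul_self : projMat U * projMat U = projMat U := by
  apply Matrix.toEuclideanLin.injective
  rw [toEuclideanLin_mul]
  apply LinearMap.ext; intro x
  simp only [LinearMap.comp_apply, projMat_apply]
  congr 1
  exact Submodule.orthogonalProjectionOnto_mem_subspace_eq_self _

lemma projMat_mul_eq_self {k : Type} [Fintype k] [DecidableEq k] (N : Matrix (Fin m) k ℂ)
    (h : LinearMap.range (Matrix.toEuclideanLin N) ≤ U) : projMat U * N = N := by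
  apply Matrix.toEuclideanLin.injective
  rw [toEuclideanLin_mul]
  apply LinearMap.ext; intro x
  rw [LinearMap.comp_apply, projMat_apply]
  exact (Submodule.starProjection_eq_self_iff (K := U)).mpr (h ⟨x, rfl⟩)

lemma projMat_mul_eq_zero {k : Type} [Fintype k] [DecidableEq k] (N : Matrix (Fin m) k ℂ)
    (h : LinearMap.range (Matrix.toEuclideanLin N) ≤ Uᗮ) : projMat U * N = 0 := by
  apply Matrix.toEuclideanLin.injective
  rw [toEuclideanLin_mul]
  apply LinearMap.ext; intro x
  rw [LinearMap.comp_apply, projMat_apply, map_zero, LinearMap.zero_apply]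
  have : U.orthogonalProjectionOnto (Matrix.toEuclideanLin N x) = 0 :=
    Submodule.orthogonalProjectionOnto_eq_zero_iff.mpr (h ⟨x, rfl⟩)
  rw [this]; rfl

lemma range_toEuclideanLin_projMat_le :
    LinearMap.range (Matrix.toEuclideanLin (projMat U)) ≤ U := by
  rw [toEuclideanLin_projMat]
  intro x hx
  obtain ⟨y, rfl⟩ := hx
  exact (U.orthogonalProjectionOnto y).2

lemma orthogonal_ker_le_range_adjoint {k : ℕ}
    (T : EuclideanSpace ℂ (Fin m) →ₗ[ℂ] EuclideanSpace ℂ (Fin k)) :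
    (LinearMap.ker T)ᗮ ≤ LinearMap.range (LinearMap.adjoint T) := by
  have h1 : (LinearMap.range (LinearMap.adjoint T))ᗮ ≤ LinearMap.ker T := by
    intro x hx
    rw [LinearMap.mem_ker]
    have h2 : (inner ℂ (LinearMap.adjoint T (T x)) x : ℂ) = 0 :=
      hx _ ⟨T x, rfl⟩
    rw [LinearMap.adjoint_inner_left] at h2
    exact inner_self_eq_zero.mp h2
  calc (LinearMap.ker T)ᗮ ≤ ((LinearMap.range (LinearMap.adjoint T))ᗮ)ᗮ :=
        Submodule.orthogonal_le h1
    _ = LinearMap.range (LinearMap.adjoint T) := Submodule.orthogonal_orthogonal _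

end ProjHelpers

theorem stmt0 {m p q : ℕ} (A : Matrix (Fin m) (Fin p) ℂ) (B : Matrix (Fin q) (Fin m) ℂ)
    (C : Matrix (Fin m) (Fin m) ℂ) (hC : C.IsHermitian)
    (M : Matrix (Fin m) (Fin m ⊕ Fin m) ℂ) (hM : M = Matrix.fromCols (eProj A) (fProj B)) :
    (∃ X : Matrix (Fin p) (Fin q) ℂ,
        (A * X * B).IsHermitian ∧ (A * X * B - C).PosSemidef) ↔
      (-(Mᴴ * C * M)).PosSemidef ∧
        LinearMap.range (Mᴴ * C * M).mulVecLin = LinearMap.range (Mᴴ * C).mulVecLin := by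
  subst hM
  set P := eProj A with hPdef
  set Q := fProj B with hQdef
  set M := Matrix.fromCols P Q with hMdef
  have hPherm : P.IsHermitian := projMat_isHermitian _
  have hQherm : Q.IsHermitian := projMat_isHermitian _
  have hPA : P * A = 0 := by
    apply projMat_mul_eq_zero
    rintro x ⟨y, rfl⟩
    exact Submodule.le_orthogonal_orthogonal _ ⟨y, rfl⟩
  have hQproj : Q = projMat (LinearMap.ker (Matrix.toEuclideanLin B)) := rfl
  have hPproj : P = projMat (LinearMap.range (Matrix.toEuclideanLin A))ᗮ := rfl
  have hBQ : B * Q = 0 := by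
    apply Matrix.toEuclideanLin.injective
    rw [toEuclideanLin_mul, hQproj]
    apply LinearMap.ext; intro x
    rw [LinearMap.comp_apply, projMat_apply, map_zero, LinearMap.zero_apply]
    exact ((LinearMap.ker (Matrix.toEuclideanLin B)).orthogonalProjectionOnto x).2
  constructor
  · rintro ⟨X, hZ, hS⟩
    have hZ' : A * X * B = Bᴴ * Xᴴ * Aᴴ := by
      conv_lhs => rw [← hZ.eq]
      simp [conjTranspose_mul, Matrix.mul_assoc]
    have hMZ : Mᴴ * (A * X * B) = 0 := by
      rw [hMdef, conjTranspose_fromCols_eq_fromRows_conjTranspose, fromRows_mul]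
      have h1 : Pᴴ * (A * X * B) = 0 := by
        rw [hPherm.eq, ← Matrix.mul_assoc, ← Matrix.mul_assoc, hPA,
          Matrix.zero_mul, Matrix.zero_mul]
      have h2 : Qᴴ * (A * X * B) = 0 := by
        rw [hQherm.eq, hZ', ← Matrix.mul_assoc, ← Matrix.mul_assoc]
        have : Q * Bᴴ = 0 := by
          have := congrArg conjTranspose hBQ
          rwa [conjTranspose_mul, hQherm.eq, conjTranspose_zero] at this
        rw [this, Matrix.zero_mul, Matrix.zero_mul]
      rw [h1, h2]
      ext (i | i) j <;> simp
    have hMC : Mᴴ * C = -(Mᴴ * (A * X * B - C)) := by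
      rw [Matrix.mul_sub, hMZ, zero_sub, neg_neg]
    set S := A * X * B - C with hSdef
    set L := (open scoped MatrixOrder in CFC.sqrt S) with hLdef
    have hLL : L * L = S := by open scoped MatrixOrder in exact CFC.sqrt_mul_sqrt_self S hS.nonneg
    have hLh : Lᴴ = L := by open scoped MatrixOrder in exact (CFC.sqrt_nonneg S).posSemidef.1
    set N := L * M with hNdef
    have key1 : Mᴴ * C * M = -(Nᴴ * N) := by
      have h1 : Nᴴ * N = Mᴴ * S * M := by
        rw [hNdef, conjTranspose_mul, hLh, ← hLL]
        simp only [Matrix.mul_assoc]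
      rw [h1, hMC, Matrix.neg_mul]
    have key2 : Mᴴ * C = -(Nᴴ * L) := by
      have h1 : Nᴴ * L = Mᴴ * S := by
        rw [hNdef, conjTranspose_mul, hLh, ← hLL]
        simp only [Matrix.mul_assoc]
      rw [hMC, h1]
    constructor
    · rw [key1, neg_neg]
      have h1 : Nᴴ * N = Mᴴ * S * M := by
        rw [hNdef, conjTranspose_mul, hLh, ← hLL]
        simp only [Matrix.mul_assoc]
      rw [h1]
      exact hS.conjTranspose_mul_mul_same M
    · rw [key1, key2]
      rw [range_mulVecLin_neg, range_mulVecLin_neg, range_conjTranspose_mul_self]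
      apply le_antisymm
      · have h1 : Nᴴ * N = (Nᴴ * L) * M := by
          rw [hNdef]; simp only [Matrix.mul_assoc]
        calc LinearMap.range Nᴴ.mulVecLin = LinearMap.range (Nᴴ * N).mulVecLin :=
              (range_conjTranspose_mul_self N).symm
          _ ≤ LinearMap.range (Nᴴ * L).mulVecLin := by
              rw [h1]; exact range_mulVecLin_mul_le _ _
      · exact range_mulVecLin_mul_le _ _
  · rintro ⟨hD, hR⟩
    set U := LinearMap.range (Matrix.toEuclideanLin M) with hUdef
    set Pr := projMat U with hPidef
    have hPiherm : Pr.IsHermitian := projMat_isHermitian _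
    have hPi2 : Pr * Pr = Pr := projMat_mul_self _
    have hPiM : Pr * M = M := projMat_mul_eq_self _ _ le_rfl
    have hPcol : LinearMap.range (Matrix.toEuclideanLin P) ≤ U := by
      rintro x ⟨v, rfl⟩
      refine ⟨(WithLp.equiv 2 _).symm (Sum.elim ((WithLp.equiv 2 _) v) 0), ?_⟩
      simp [hMdef, Matrix.toEuclideanLin_apply, Matrix.fromCols_mulVec_sumElim,
        Matrix.mulVec_zero]
    have hQcol : LinearMap.range (Matrix.toEuclideanLin Q) ≤ U := by
      rintro x ⟨v, rfl⟩
      refine ⟨(WithLp.equiv 2 _).symm (Sum.elim 0 ((WithLp.equiv 2 _) v)), ?_⟩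
      simp [hMdef, Matrix.toEuclideanLin_apply, Matrix.fromCols_mulVec_sumElim,
        Matrix.mulVec_zero]
    have hPiP : Pr * P = P := projMat_mul_eq_self _ _ hPcol
    have hPiQ : Pr * Q = Q := projMat_mul_eq_self _ _ hQcol
    obtain ⟨G, hG⟩ : ∃ G : Matrix (Fin m ⊕ Fin m) (Fin m) ℂ, M * G = Pr :=
      exists_eq_mul_of_range_le M Pr (hUdef ▸ range_toEuclideanLin_projMat_le U)
    have hG2 : Gᴴ * Mᴴ = Pr := by
      rw [← conjTranspose_mul, hG, hPiherm.eq]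
    have h1 : Pr * C * Pr = Gᴴ * (Mᴴ * C * M) * G := by
      nth_rw 1 [← hG2]
      rw [← hG]
      simp only [Matrix.mul_assoc]
    have hD' : (-(Pr * C * Pr)).PosSemidef := by
      have h2 := hD.conjTranspose_mul_mul_same G
      have h3 : Gᴴ * -(Mᴴ * C * M) * G = -(Pr * C * Pr) := by
        rw [Matrix.mul_neg, Matrix.neg_mul, h1]
      rwa [h3] at h2
    have hPiC : Pr * C = Gᴴ * (Mᴴ * C) := by
      rw [← hG2]; simp only [Matrix.mul_assoc]
    have s7 : ∀ x, (Pr * C) *ᵥ x ∈ LinearMap.range (Pr * C * Pr).mulVecLin := by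
      intro x
      have h4 : (Mᴴ * C) *ᵥ x ∈ LinearMap.range (Mᴴ * C * M).mulVecLin := by
        rw [hR]; exact ⟨x, rfl⟩
      obtain ⟨y, hy⟩ := h4
      refine ⟨M *ᵥ y, ?_⟩
      rw [Matrix.mulVecLin_apply] at hy ⊢
      have h5 : Pr * C * Pr * M = Gᴴ * (Mᴴ * C * M) := by
        calc Pr * C * Pr * M = Pr * C * (Pr * M) := by rw [Matrix.mul_assoc]
          _ = Pr * C * M := by rw [hPiM]
          _ = Gᴴ * (Mᴴ * C) * M := by rw [hPiC]
          _ = Gᴴ * (Mᴴ * C * M) := by simp only [Matrix.mul_assoc]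
      rw [Matrix.mulVec_mulVec, h5, ← Matrix.mulVec_mulVec, hy, Matrix.mulVec_mulVec, ← hPiC]
    obtain ⟨F0, hF0⟩ : ∃ F0 : Matrix (Fin m) (Fin m) ℂ, (Pr * C * Pr) * F0 = Pr * C * (1 - Pr) := by
      apply exists_eq_mul_of_forall_col
      intro j
      have hcol : (fun i => (Pr * C * (1 - Pr)) i j) = (Pr * C * (1 - Pr)) *ᵥ Pi.single j 1 := by
        rw [Matrix.mulVec_single_one]; rfl
      rw [hcol, ← Matrix.mulVec_mulVec]
      exact s7 _
    have hDF : -(Pr * C * Pr) * (-F0) = Pr * C * (1 - Pr) := by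
      rw [Matrix.neg_mul, Matrix.mul_neg, neg_neg, hF0]
    set D := -(Pr * C * Pr) with hDdef
    set F := -F0 with hFdef
    set E := Pr * C * (1 - Pr) with hEdef
    have hDherm : Dᴴ = D := hD'.1
    have hFD : Fᴴ * D = Eᴴ := by
      have h6 := congrArg conjTranspose hDF
      rw [conjTranspose_mul, hDherm] at h6
      exact h6
    have hEherm : Eᴴ = (1 - Pr) * C * Pr := by
      rw [hEdef]
      simp [conjTranspose_mul, conjTranspose_sub, conjTranspose_one, hPiherm.eq, hC.eq,
        Matrix.mul_assoc]
    set Z := (1 - Pr) * C * (1 - Pr) + Fᴴ * D * F with hZdef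
    have z1 : Z.IsHermitian := by
      show Zᴴ = Z
      rw [hZdef, hDdef]
      simp [conjTranspose_add, conjTranspose_mul, conjTranspose_sub, conjTranspose_one,
        conjTranspose_neg, hPiherm.eq, hC.eq, Matrix.mul_assoc]
    have z2 : Z - C = (1 - F)ᴴ * D * (1 - F) := by
      have hexp : Z - C = D - E - Eᴴ + Fᴴ * D * F := by
        rw [hZdef, hEherm, hDdef, hEdef]
        noncomm_ring
      have hexp2 : (1 - F)ᴴ * D * (1 - F) = D - D * F - Fᴴ * D + Fᴴ * D * F := by
        rw [conjTranspose_sub, conjTranspose_one]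
        noncomm_ring
      rw [hexp, hexp2, hDF, hFD]
    have z3 : (Z - C).PosSemidef := by
      rw [z2]; exact hD'.conjTranspose_mul_mul_same (1 - F)
    have hPi1m : Pr * (1 - Pr) = 0 := by
      rw [Matrix.mul_sub, Matrix.mul_one, hPi2, sub_self]
    have z4 : Pr * Z = 0 := by
      rw [hZdef, Matrix.mul_add]
      have t1 : Pr * ((1 - Pr) * C * (1 - Pr)) = 0 := by
        calc Pr * ((1 - Pr) * C * (1 - Pr)) = (Pr * (1 - Pr)) * (C * (1 - Pr)) := by
              simp only [Matrix.mul_assoc]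
          _ = 0 := by rw [hPi1m, Matrix.zero_mul]
      have t2 : Pr * (Fᴴ * D * F) = 0 := by
        calc Pr * (Fᴴ * D * F) = Pr * (Fᴴ * D) * F := by simp only [Matrix.mul_assoc]
          _ = Pr * Eᴴ * F := by rw [hFD]
          _ = 0 := by
              rw [hEherm]
              have t3 : Pr * ((1 - Pr) * C * Pr) = 0 := by
                calc Pr * ((1 - Pr) * C * Pr) = (Pr * (1 - Pr)) * (C * Pr) := by
                      simp only [Matrix.mul_assoc]
                  _ = 0 := by rw [hPi1m, Matrix.zero_mul]
              rw [t3, Matrix.zero_mul]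
      rw [t1, t2, add_zero]
    have z5 : P * Z = 0 := by
      have hPPi : P * Pr = P := by
        have h7 := congrArg conjTranspose hPiP
        rw [conjTranspose_mul, hPherm.eq, hPiherm.eq] at h7
        exact h7
      calc P * Z = P * (Pr * Z) := by rw [← Matrix.mul_assoc, hPPi]
        _ = 0 := by rw [z4, Matrix.mul_zero]
    have z6 : Q * Z = 0 := by
      have hQPi : Q * Pr = Q := by
        have h7 := congrArg conjTranspose hPiQ
        rw [conjTranspose_mul, hQherm.eq, hPiherm.eq] at h7
        exact h7
      calc Q * Z = Q * (Pr * Z) := by rw [← Matrix.mul_assoc, hQPi]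
        _ = 0 := by rw [z4, Matrix.mul_zero]
    obtain ⟨G₂, hG₂⟩ : ∃ G₂ : Matrix (Fin p) (Fin m) ℂ, A * G₂ = 1 - P := by
      apply exists_eq_mul_of_range_le
      rintro x ⟨v, rfl⟩
      have h6 : Matrix.toEuclideanLin (1 - P) v = v - Matrix.toEuclideanLin P v := by
        simp [map_sub, toEuclideanLin_one, LinearMap.sub_apply]
      rw [h6, hPproj, projMat_apply]
      have h7 := Submodule.sub_starProjection_mem_orthogonal
        (K := (LinearMap.range (Matrix.toEuclideanLin A))ᗮ) v
      rwa [Submodule.orthogonal_orthogonal] at h7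
    obtain ⟨W, hW⟩ : ∃ W : Matrix (Fin q) (Fin m) ℂ, Bᴴ * W = Z := by
      apply exists_eq_mul_of_range_le
      rintro x ⟨v, rfl⟩
      have h8 : Matrix.toEuclideanLin Q (Matrix.toEuclideanLin Z v) = 0 := by
        have h8a := congrArg Matrix.toEuclideanLin z6
        rw [toEuclideanLin_mul] at h8a
        calc Matrix.toEuclideanLin Q (Matrix.toEuclideanLin Z v)
            = (Matrix.toEuclideanLin Q ∘ₗ Matrix.toEuclideanLin Z) v := rfl
          _ = Matrix.toEuclideanLin (0 : Matrix (Fin m) (Fin m) ℂ) v := by rw [← h8a]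
          _ = 0 := by rw [map_zero]; rfl
      rw [hQproj, projMat_apply] at h8
      have h9 : (LinearMap.ker (Matrix.toEuclideanLin B)).orthogonalProjectionOnto
          (Matrix.toEuclideanLin Z v) = 0 := Submodule.coe_eq_zero.mp h8
      have h10 : Matrix.toEuclideanLin Z v ∈ (LinearMap.ker (Matrix.toEuclideanLin B))ᗮ :=
        Submodule.orthogonalProjectionOnto_eq_zero_iff.mp h9
      have h11 := orthogonal_ker_le_range_adjoint (Matrix.toEuclideanLin B) h10
      rwa [← Matrix.toEuclideanLin_conjTranspose_eq_adjoint] at h11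
    have hWB : Wᴴ * B = Z := by
      have h12 := congrArg conjTranspose hW
      rw [conjTranspose_mul, conjTranspose_conjTranspose, z1.eq] at h12
      exact h12
    have hAXB : A * (G₂ * Wᴴ) * B = Z := by
      calc A * (G₂ * Wᴴ) * B = (A * G₂) * (Wᴴ * B) := by simp only [Matrix.mul_assoc]
        _ = (1 - P) * Z := by rw [hG₂, hWB]
        _ = Z - P * Z := by rw [Matrix.sub_mul, Matrix.one_mul]
        _ = Z := by rw [z5, sub_zero]
    exact ⟨G₂ * Wᴴ, by rw [hAXB]; exact z1, by rw [hAXB]; exact z3⟩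
end

section
/- Let A ∈ ℂ^{m×n} and B ∈ ℂ^{m×m}. Then there exists a Hermitian X ∈ ℂ^{n×n} such that AXA* ≻ −BB* if and only if r([A, B]) = m, where [A, B] is the m×(n+m) block matrix. -/
open Matrix ComplexOrder

theorem stmt7 {m n : ℕ} (A : Matrix (Fin m) (Fin n) ℂ) (B : Matrix (Fin m) (Fin m) ℂ) :
    (∃ X : Matrix (Fin n) (Fin n) ℂ, X.IsHermitian ∧ (A * X * Aᴴ - (-(B * Bᴴ))).PosDef) ↔
      (Matrix.fromCols A B).rank = m := by
  constructor
  · rintro ⟨X, hX, hpd⟩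
    have key : A * X * Aᴴ - -(B * Bᴴ) =
        (Matrix.fromCols A B * (fromBlocks X 0 0 1 : Matrix (Fin n ⊕ Fin m) (Fin n ⊕ Fin m) ℂ)) *
          (Matrix.fromCols A B)ᴴ := by
      rw [conjTranspose_fromCols_eq_fromRows_conjTranspose,
        fromCols_mul_fromBlocks, fromCols_mul_fromRows]
      simp [sub_neg_eq_add]
    refine le_antisymm ((Matrix.fromCols A B).rank_le_card_height.trans (by simp)) ?_
    calc m = Fintype.card (Fin m) := (Fintype.card_fin m).symm
      _ = (A * X * Aᴴ - -(B * Bᴴ)).rank := (rank_of_isUnit _ hpd.isUnit).symm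
      _ ≤ (Matrix.fromCols A B * fromBlocks X 0 0 1).rank := by
          rw [key]; exact rank_mul_le_left _ _
      _ ≤ (Matrix.fromCols A B).rank := rank_mul_le_left _ _
  · intro hr
    set C := Matrix.fromCols A B with hC
    have key : A * (1 : Matrix (Fin n) (Fin n) ℂ) * Aᴴ - -(B * Bᴴ) = C * Cᴴ := by
      rw [hC, conjTranspose_fromCols_eq_fromRows_conjTranspose, fromCols_mul_fromRows]
      simp [sub_neg_eq_add, Matrix.mul_one]
    have hsurj : LinearMap.range C.mulVecLin = ⊤ := by
      apply Submodule.eq_top_of_finrank_eq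
      rw [← Matrix.rank, hr]
      simp [Module.finrank_fintype_fun_eq_card]
    refine ⟨(1 : Matrix (Fin n) (Fin n) ℂ), Matrix.isHermitian_one, ?_⟩
    rw [key]
    refine posDef_iff_dotProduct_mulVec.mpr ⟨isHermitian_mul_conjTranspose_self C, fun x hx => ?_⟩
    have hps := posSemidef_self_mul_conjTranspose C
    rcases (hps.dotProduct_mulVec_nonneg x).lt_or_eq with h | h
    · exact h
    · exfalso
      have h0 : Cᴴ *ᵥ x = 0 := by
        rw [← self_mul_conjTranspose_mulVec_eq_zero C x]
        exact ((hps.dotProduct_mulVec_zero_iff x).mp h.symm)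
      obtain ⟨y, hy⟩ := (LinearMap.range_eq_top.mp hsurj) x
      have hy' : C *ᵥ y = x := by rwa [Matrix.mulVecLin_apply] at hy
      have hz : star x ᵥ* C = 0 := by
        have := congrArg star h0
        rwa [Matrix.star_mulVec, conjTranspose_conjTranspose, star_zero] at this
      have : star x ⬝ᵥ x = 0 := by
        nth_rewrite 2 [← hy']
        rw [dotProduct_mulVec, hz, zero_dotProduct]
      exact hx (dotProduct_star_self_eq_zero.mp this)
end

section
/- Let A ∈ ℂ^{m×n}, B ∈ ℂ^{m×p} and C ∈ ℂ^{p×p}, and for Hermitian X ∈ ℂ^{n×n} let φ(X) denote the (m+p)×(m+p) Hermitian block matrix [AXA* B; B* CC*]. Then: (a) there exists a Hermitian X ∈ ℂ^{n×n} with φ(X) ⪰ 0 if and only if ℛ(B) ⊆ ℛ(A) and ℛ(B*) ⊆ ℛ(C); (b) there exists a Hermitian X ∈ ℂ^{n×n} with φ(X) ≻ 0 if and only if r(A) = m and r(C) = p. -/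
open Matrix ComplexOrder

section Helpers

variable {ι κ ρ : Type*} [Fintype ι] [Fintype κ] [Fintype ρ]
  [DecidableEq ι] [DecidableEq κ] [DecidableEq ρ]

lemma rangeMulLe (M : Matrix ι κ ℂ) (K : Matrix κ ρ ℂ) :
    LinearMap.range (M * K).mulVecLin ≤ LinearMap.range M.mulVecLin := by
  rw [Matrix.mulVecLin_mul]; exact LinearMap.range_comp_le_range _ _

lemma rangeCTMulSelf (K : Matrix ι κ ℂ) :
    LinearMap.range (Kᴴ * K).mulVecLin = LinearMap.range Kᴴ.mulVecLin := by
  have h1 : Kᴴ.rank ≤ (Kᴴ * K).rank := by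
    rw [Matrix.rank_conjTranspose_mul_self, Matrix.rank_conjTranspose]
  exact Submodule.eq_of_le_of_finrank_le (rangeMulLe _ _) h1

lemma existsEqMul (M : Matrix ι κ ℂ) (N : Matrix ι ρ ℂ)
    (h : LinearMap.range N.mulVecLin ≤ LinearMap.range M.mulVecLin) :
    ∃ W : Matrix κ ρ ℂ, M * W = N := by
  have hc : ∀ j, ∃ w, M *ᵥ w = N *ᵥ Pi.single j 1 := fun j => h ⟨Pi.single j 1, rfl⟩
  choose w hw using hc
  refine ⟨Matrix.of fun i j => w j i, ?_⟩
  ext i j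
  have h2 := hw j
  rw [Matrix.mulVec_single_one] at h2
  have := congrFun h2 i
  simpa [Matrix.mul_apply, Matrix.mulVec, dotProduct] using this

lemma posDefOfKer {M : Matrix ι ι ℂ} (h : M.PosSemidef)
    (hk : ∀ x, M *ᵥ x = 0 → x = 0) : M.PosDef := by
  refine Matrix.PosDef.of_dotProduct_mulVec_pos h.1 fun x hx => ?_
  rcases (h.dotProduct_mulVec_nonneg x).lt_or_eq with hlt | heq
  · exact hlt
  · exact absurd (hk x ((h.dotProduct_mulVec_zero_iff x).mp heq.symm)) hx

lemma kerCTTrivial {a b : ℕ} {A : Matrix (Fin a) (Fin b) ℂ} (hA : A.rank = a) :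
    ∀ x : Fin a → ℂ, Aᴴ *ᵥ x = 0 → x = 0 := by
  have hrk : Aᴴ.rank = a := by rw [Matrix.rank_conjTranspose]; exact hA
  have hker : LinearMap.ker Aᴴ.mulVecLin = ⊥ := by
    have := LinearMap.finrank_range_add_finrank_ker Aᴴ.mulVecLin
    rw [show Module.finrank ℂ (LinearMap.range Aᴴ.mulVecLin) = a from hrk] at this
    simp only [Module.finrank_pi, Fintype.card_fin] at this
    exact Submodule.finrank_eq_zero.mp (by omega)
  intro x hx
  exact (LinearMap.ker_eq_bot'.mp hker) x hx

lemma posDefMulCT {a b : ℕ} {A : Matrix (Fin a) (Fin b) ℂ} (hA : A.rank = a) :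
    (A * Aᴴ).PosDef := by
  refine posDefOfKer (Matrix.posSemidef_self_mul_conjTranspose A) fun x hx => ?_
  exact kerCTTrivial hA x ((Matrix.self_mul_conjTranspose_mulVec_eq_zero A x).mp hx)

lemma blocksOfPSD {a b : ℕ} {P : Matrix (Fin a) (Fin a) ℂ} {B : Matrix (Fin a) (Fin b) ℂ}
    {Q : Matrix (Fin b) (Fin b) ℂ} (h : (Matrix.fromBlocks P B Bᴴ Q).PosSemidef) :
    LinearMap.range B.mulVecLin ≤ LinearMap.range P.mulVecLin ∧
    LinearMap.range Bᴴ.mulVecLin ≤ LinearMap.range Q.mulVecLin := by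
  obtain ⟨N, hN⟩ : ∃ N : Matrix (Fin a ⊕ Fin b) (Fin a ⊕ Fin b) ℂ, Matrix.fromBlocks P B Bᴴ Q = Nᴴ * N := by
    open scoped MatrixOrder in exact CStarAlgebra.nonneg_iff_eq_star_mul_self.mp h.nonneg
  set N₁ := N.submatrix id Sum.inl with hN₁
  set N₂ := N.submatrix id Sum.inr with hN₂
  have hNc : N = Matrix.fromCols N₁ N₂ := by
    ext i j; cases j <;> rfl
  have hblocks : Matrix.fromBlocks P B Bᴴ Q =
      Matrix.fromBlocks (N₁ᴴ * N₁) (N₁ᴴ * N₂) (N₂ᴴ * N₁) (N₂ᴴ * N₂) := by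
    rw [hN, hNc, Matrix.conjTranspose_fromCols_eq_fromRows_conjTranspose,
      Matrix.fromRows_mul_fromCols]
  have hP : P = N₁ᴴ * N₁ := by
    have := congrArg Matrix.toBlocks₁₁ hblocks
    simpa [Matrix.toBlocks_fromBlocks₁₁] using this
  have hB : B = N₁ᴴ * N₂ := by
    have := congrArg Matrix.toBlocks₁₂ hblocks
    simpa [Matrix.toBlocks_fromBlocks₁₂] using this
  have hQ : Q = N₂ᴴ * N₂ := by
    have := congrArg Matrix.toBlocks₂₂ hblocks
    simpa [Matrix.toBlocks_fromBlocks₂₂] using this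
  have hBH : Bᴴ = N₂ᴴ * N₁ := by
    rw [hB, Matrix.conjTranspose_mul, Matrix.conjTranspose_conjTranspose]
  constructor
  · rw [hB, hP, rangeCTMulSelf]; exact rangeMulLe _ _
  · rw [hBH, hQ, rangeCTMulSelf]; exact rangeMulLe _ _

end Helpers

theorem stmt9 {m n p : ℕ} (A : Matrix (Fin m) (Fin n) ℂ) (B : Matrix (Fin m) (Fin p) ℂ)
    (C : Matrix (Fin p) (Fin p) ℂ)
    (φ : Matrix (Fin n) (Fin n) ℂ → Matrix (Fin m ⊕ Fin p) (Fin m ⊕ Fin p) ℂ)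
    (hφ : ∀ X, φ X = Matrix.fromBlocks (A * X * Aᴴ) B Bᴴ (C * Cᴴ)) :
    ((∃ X : Matrix (Fin n) (Fin n) ℂ, X.IsHermitian ∧ (φ X).PosSemidef) ↔
        LinearMap.range B.mulVecLin ≤ LinearMap.range A.mulVecLin ∧
          LinearMap.range Bᴴ.mulVecLin ≤ LinearMap.range C.mulVecLin) ∧
      ((∃ X : Matrix (Fin n) (Fin n) ℂ, X.IsHermitian ∧ (φ X).PosDef) ↔
        A.rank = m ∧ C.rank = p) := by
  constructor
  · constructor
    · -- (a) forward
      rintro ⟨X, -, hPSD⟩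
      rw [hφ X] at hPSD
      obtain ⟨h1, h2⟩ := blocksOfPSD hPSD
      constructor
      · refine h1.trans ?_
        rw [show A * X * Aᴴ = A * (X * Aᴴ) from Matrix.mul_assoc _ _ _]
        exact rangeMulLe _ _
      · exact h2.trans (rangeMulLe C Cᴴ)
    · -- (a) backward
      rintro ⟨h1, h2⟩
      have hCC : LinearMap.range (C * Cᴴ).mulVecLin = LinearMap.range C.mulVecLin := by
        have := rangeCTMulSelf Cᴴ
        rwa [Matrix.conjTranspose_conjTranspose] at this
      obtain ⟨W, hW⟩ := existsEqMul (C * Cᴴ) Bᴴ (hCC ▸ h2)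
      set K : Matrix (Fin p) (Fin m) ℂ := Cᴴ * W with hK
      have hKH : Kᴴ = Wᴴ * C := by
        rw [hK, Matrix.conjTranspose_mul, Matrix.conjTranspose_conjTranspose]
      have hB : B = Kᴴ * Cᴴ := by
        have := congrArg Matrix.conjTranspose hW
        rw [Matrix.conjTranspose_mul, Matrix.conjTranspose_mul,
          Matrix.conjTranspose_conjTranspose, Matrix.conjTranspose_conjTranspose] at this
        rw [← this, hKH, Matrix.mul_assoc]
      have hBH : Bᴴ = C * K := by
        rw [hB, Matrix.conjTranspose_mul, Matrix.conjTranspose_conjTranspose,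
          Matrix.conjTranspose_conjTranspose]
      have hD : Kᴴ * K = B * W := by
        rw [hB, hK, Matrix.mul_assoc]
      have hrange : LinearMap.range Kᴴ.mulVecLin ≤ LinearMap.range A.mulVecLin := by
        rw [← rangeCTMulSelf K, hD]
        exact (rangeMulLe B W).trans h1
      obtain ⟨U, hU⟩ := existsEqMul A Kᴴ hrange
      refine ⟨U * Uᴴ, Matrix.isHermitian_mul_conjTranspose_self U, ?_⟩
      rw [hφ]
      have hAXA : A * (U * Uᴴ) * Aᴴ = Kᴴ * K := by
        calc A * (U * Uᴴ) * Aᴴ = (A * U) * (A * U)ᴴ := by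
              rw [Matrix.conjTranspose_mul]
              simp only [Matrix.mul_assoc]
        _ = Kᴴ * K := by rw [hU, Matrix.conjTranspose_conjTranspose]
      rw [hAXA, hBH, hB,
        show C * Cᴴ = Cᴴᴴ * Cᴴ by rw [Matrix.conjTranspose_conjTranspose],
        show C * K = Cᴴᴴ * K by rw [Matrix.conjTranspose_conjTranspose],
        ← Matrix.fromRows_mul_fromCols Kᴴ Cᴴᴴ K Cᴴ,
        ← Matrix.conjTranspose_fromCols_eq_fromRows_conjTranspose]
      exact Matrix.posSemidef_conjTranspose_mul_self _
  · constructor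
    · -- (b) forward
      rintro ⟨X, hXh, hPD⟩
      rw [hφ X] at hPD
      have hQ : (C * Cᴴ).PosDef := by
        refine Matrix.PosDef.of_dotProduct_mulVec_pos (Matrix.isHermitian_mul_conjTranspose_self C) fun v hv => ?_
        have hx : Sum.elim (0 : Fin m → ℂ) v ≠ 0 :=
          fun h0 => hv (funext fun i => congrFun h0 (Sum.inr i))
        have hstar : star (Sum.elim (0 : Fin m → ℂ) v) =
            Sum.elim (0 : Fin m → ℂ) (star v) :=
          funext fun i => by cases i <;> simp
        have := hPD.dotProduct_mulVec_pos hx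
        rw [Matrix.fromBlocks_mulVec] at this
        simp only [Sum.elim_comp_inl, Sum.elim_comp_inr, Matrix.mulVec_zero, zero_add,
          add_zero] at this
        rwa [hstar, sumElim_dotProduct_sumElim, zero_dotProduct,
          zero_add] at this
      have hP : (A * X * Aᴴ).PosDef := by
        refine Matrix.PosDef.of_dotProduct_mulVec_pos (Matrix.isHermitian_mul_mul_conjTranspose A hXh) fun v hv => ?_
        · have hx : Sum.elim v (0 : Fin p → ℂ) ≠ 0 :=
            fun h0 => hv (funext fun i => congrFun h0 (Sum.inl i))
          have hstar : star (Sum.elim v (0 : Fin p → ℂ)) =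
              Sum.elim (star v) (0 : Fin p → ℂ) :=
            funext fun i => by cases i <;> simp
          have := hPD.dotProduct_mulVec_pos hx
          rw [Matrix.fromBlocks_mulVec] at this
          simp only [Sum.elim_comp_inl, Sum.elim_comp_inr, Matrix.mulVec_zero, zero_add,
            add_zero] at this
          rwa [hstar, sumElim_dotProduct_sumElim, zero_dotProduct,
            add_zero] at this
      constructor
      · refine le_antisymm (A.rank_le_card_height.trans (Fintype.card_fin m).le) ?_
        have h1 : (A * X * Aᴴ).rank = m :=
          Matrix.rank_of_isUnit _ hP.isUnit |>.trans (Fintype.card_fin m)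
        calc m = (A * X * Aᴴ).rank := h1.symm
        _ ≤ (A * X).rank := Matrix.rank_mul_le_left _ _
        _ ≤ A.rank := Matrix.rank_mul_le_left _ _
      · have h1 : (C * Cᴴ).rank = p :=
          Matrix.rank_of_isUnit _ hQ.isUnit |>.trans (Fintype.card_fin p)
        rwa [Matrix.rank_self_mul_conjTranspose] at h1
    · -- (b) backward
      rintro ⟨hA, hC⟩
      have hP : (A * Aᴴ).PosDef := posDefMulCT hA
      have hQ : (C * Cᴴ).PosDef := posDefMulCT hC
      have hdetA : IsUnit (A * Aᴴ).det := hP.isUnit.map (Matrix.detMonoidHom)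
      have hdetC : IsUnit (C * Cᴴ).det := hQ.isUnit.map (Matrix.detMonoidHom)
      haveI : Invertible (C * Cᴴ) := hQ.isUnit.invertible
      set S : Matrix (Fin m) (Fin m) ℂ := B * (C * Cᴴ)⁻¹ * Bᴴ + 1 with hS
      have hQinvH : ((C * Cᴴ)⁻¹)ᴴ = (C * Cᴴ)⁻¹ := hQ.inv.isHermitian
      have hAinvH : ((A * Aᴴ)⁻¹)ᴴ = (A * Aᴴ)⁻¹ := hP.inv.isHermitian
      have hSH : Sᴴ = S := by
        rw [hS, Matrix.conjTranspose_add, Matrix.conjTranspose_one,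
          Matrix.conjTranspose_mul, Matrix.conjTranspose_mul, hQinvH,
          Matrix.conjTranspose_conjTranspose, Matrix.mul_assoc]
      set X : Matrix (Fin n) (Fin n) ℂ := Aᴴ * ((A * Aᴴ)⁻¹ * S * (A * Aᴴ)⁻¹) * A with hX
      have hXH : X.IsHermitian := by
        show Xᴴ = X
        rw [hX]
        simp only [Matrix.conjTranspose_mul, Matrix.conjTranspose_conjTranspose, hAinvH, hSH]
        simp only [Matrix.mul_assoc]
      have hAXA : A * X * Aᴴ = S := by
        rw [hX]
        simp only [← Matrix.mul_assoc]
        rw [Matrix.mul_nonsing_inv _ hdetA, one_mul, Matrix.mul_assoc,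
          Matrix.mul_assoc, Matrix.nonsing_inv_mul _ hdetA, Matrix.mul_one]
      refine ⟨X, hXH, ?_⟩
      rw [hφ, hAXA]
      have hPSD : (Matrix.fromBlocks S B Bᴴ (C * Cᴴ)).PosSemidef := by
        rw [Matrix.PosDef.fromBlocks₂₂ S B hQ, hS, add_sub_cancel_left]
        exact Matrix.PosDef.one.posSemidef
      refine posDefOfKer hPSD fun x hx => ?_
      have hdet : IsUnit (Matrix.fromBlocks S B Bᴴ (C * Cᴴ)).det := by
        rw [Matrix.det_fromBlocks₂₂, Matrix.invOf_eq_nonsing_inv, hS, add_sub_cancel_left,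
          Matrix.det_one, mul_one]
        exact hdetC
      have := congrArg (fun y => (Matrix.fromBlocks S B Bᴴ (C * Cᴴ))⁻¹ *ᵥ y) hx
      simpa [Matrix.mulVec_mulVec, Matrix.nonsing_inv_mul _ hdet] using this
end

section
/- Let A ∈ ℂ^{m×n} and B ∈ ℂ^{m×m}. Then: (a) there exists X ∈ ℂ^{n×n} such that AXX*A* ⪰ BB* if and only if ℛ(B) ⊆ ℛ(A); (b) there exists X ∈ ℂ^{n×n} such that AXX*A* ≻ BB* if and only if r(A) = m. -/
open Matrix ComplexOrder

private lemma exists_comp_of_ker_le_ker {K V W U : Type*} [Field K]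
    [AddCommGroup V] [Module K V] [AddCommGroup W] [Module K W]
    [AddCommGroup U] [Module K U] (f : V →ₗ[K] W) (g : V →ₗ[K] U)
    (h : LinearMap.ker f ≤ LinearMap.ker g) : ∃ h' : W →ₗ[K] U, h' ∘ₗ f = g := by
  obtain ⟨s, hs⟩ := f.rangeRestrict.exists_rightInverse_of_surjective
    (LinearMap.range_eq_top.2 f.surjective_rangeRestrict)
  obtain ⟨h', hh'⟩ := LinearMap.exists_extend (g ∘ₗ s)
  refine ⟨h', LinearMap.ext fun x => ?_⟩
  have h1 : f (s (f.rangeRestrict x)) = f x := by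
    have := congrArg Subtype.val (LinearMap.congr_fun hs (f.rangeRestrict x))
    simpa using this
  have h2 : s (f.rangeRestrict x) - x ∈ LinearMap.ker g :=
    h (by simp [LinearMap.mem_ker, map_sub, h1])
  have h3 : g (s (f.rangeRestrict x)) = g x := by
    have h4 := LinearMap.mem_ker.mp h2
    rw [map_sub, sub_eq_zero] at h4
    exact h4
  calc h' (f x) = h' ((LinearMap.range f).subtype (f.rangeRestrict x)) := rfl
    _ = g (s (f.rangeRestrict x)) := LinearMap.congr_fun hh' _
    _ = g x := h3

private lemma exists_mul_eq' {m n p : ℕ} (A : Matrix (Fin m) (Fin n) ℂ)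
    (D : Matrix (Fin m) (Fin p) ℂ)
    (h : LinearMap.range D.mulVecLin ≤ LinearMap.range A.mulVecLin) :
    ∃ C : Matrix (Fin n) (Fin p) ℂ, A * C = D := by
  have hj : ∀ j, ∃ c, A *ᵥ c = fun i => D i j := fun j => by
    obtain ⟨c, hc⟩ := h (LinearMap.mem_range_self D.mulVecLin (Pi.single j 1))
    exact ⟨c, by funext i; have := congrFun hc i; simpa using this⟩
  choose c hc using hj
  refine ⟨Matrix.of fun i j => c j i, ?_⟩
  ext i j
  have := congrFun (hc j) i
  simpa [Matrix.mul_apply, Matrix.mulVec, dotProduct] using this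

private lemma key_quad {m n : ℕ} (A : Matrix (Fin m) (Fin n) ℂ)
    (X : Matrix (Fin n) (Fin n) ℂ) (B : Matrix (Fin m) (Fin m) ℂ)
    {w : Fin m → ℂ} (hw : Aᴴ *ᵥ w = 0) :
    star w ⬝ᵥ (A * X * Xᴴ * Aᴴ - B * Bᴴ) *ᵥ w
      = -(star (Bᴴ *ᵥ w) ⬝ᵥ (Bᴴ *ᵥ w)) := by
  have h1 : (A * X * Xᴴ * Aᴴ) *ᵥ w = 0 := by
    rw [← Matrix.mulVec_mulVec, hw, Matrix.mulVec_zero]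
  rw [Matrix.sub_mulVec, h1, zero_sub, dotProduct_neg, ← Matrix.mulVec_mulVec,
    Matrix.dotProduct_mulVec, Matrix.star_mulVec, Matrix.conjTranspose_conjTranspose]

open scoped MatrixOrder in
private lemma existsX {m n p : ℕ} (A : Matrix (Fin m) (Fin n) ℂ)
    (C : Matrix (Fin n) (Fin p) ℂ) :
    ∃ X : Matrix (Fin n) (Fin n) ℂ, A * X * Xᴴ * Aᴴ = (A * C) * (A * C)ᴴ := by
  have hP : (C * Cᴴ).PosSemidef := Matrix.posSemidef_self_mul_conjTranspose C
  refine ⟨CFC.sqrt (C * Cᴴ), ?_⟩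
  have hH : (CFC.sqrt (C * Cᴴ))ᴴ = CFC.sqrt (C * Cᴴ) := (CFC.sqrt_nonneg _).posSemidef.1
  calc A * CFC.sqrt (C * Cᴴ) * (CFC.sqrt (C * Cᴴ))ᴴ * Aᴴ = A * (CFC.sqrt (C * Cᴴ) * CFC.sqrt (C * Cᴴ)) * Aᴴ := by
        rw [hH]; simp only [Matrix.mul_assoc]
    _ = A * (C * Cᴴ) * Aᴴ := by rw [CFC.sqrt_mul_sqrt_self _ hP.nonneg]
    _ = (A * C) * (A * C)ᴴ := by simp only [Matrix.conjTranspose_mul, Matrix.mul_assoc]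

open scoped MatrixOrder in
theorem stmt10 {m n : ℕ} (A : Matrix (Fin m) (Fin n) ℂ) (B : Matrix (Fin m) (Fin m) ℂ) :
    ((∃ X : Matrix (Fin n) (Fin n) ℂ, (A * X * Xᴴ * Aᴴ - B * Bᴴ).PosSemidef) ↔
        LinearMap.range B.mulVecLin ≤ LinearMap.range A.mulVecLin) ∧
      ((∃ X : Matrix (Fin n) (Fin n) ℂ, (A * X * Xᴴ * Aᴴ - B * Bᴴ).PosDef) ↔
        A.rank = m) := by
  constructor
  · constructor
    · rintro ⟨X, hX⟩
      have hker : ∀ w, Aᴴ *ᵥ w = 0 → Bᴴ *ᵥ w = 0 := fun w hw => by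
        have h0 := hX.dotProduct_mulVec_nonneg w
        rw [key_quad A X B hw] at h0
        have h1 := dotProduct_star_self_nonneg (Bᴴ *ᵥ w)
        exact dotProduct_star_self_eq_zero.mp
          (le_antisymm (neg_nonneg.mp h0) h1)
      obtain ⟨h', hcomp⟩ := exists_comp_of_ker_le_ker Aᴴ.mulVecLin Bᴴ.mulVecLin
        (fun w hw => LinearMap.mem_ker.mpr (hker w (LinearMap.mem_ker.mp hw)))
      set C := LinearMap.toMatrix' h' with hCdef
      have hC : C.mulVecLin = h' := LinearMap.toMatrix'.symm_apply_apply h'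
      have hMk : (C * Aᴴ).mulVecLin = Bᴴ.mulVecLin := by
        rw [Matrix.mulVecLin_mul, hC, hcomp]
      have hMe : C * Aᴴ = Bᴴ := by
        calc C * Aᴴ = LinearMap.toMatrix' ((C * Aᴴ).mulVecLin) :=
              (LinearMap.toMatrix'.apply_symm_apply _).symm
          _ = LinearMap.toMatrix' Bᴴ.mulVecLin := by rw [hMk]
          _ = Bᴴ := LinearMap.toMatrix'.apply_symm_apply _
      have hB : B = A * Cᴴ := by
        have h5 := congrArg Matrix.conjTranspose hMe
        simpa [Matrix.conjTranspose_mul] using h5.symm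
      rw [hB, Matrix.mulVecLin_mul]
      exact LinearMap.range_comp_le_range _ _
    · intro hle
      obtain ⟨C, hC⟩ := exists_mul_eq' A B hle
      obtain ⟨X, hXeq⟩ := existsX A C
      exact ⟨X, by rw [hXeq, hC, sub_self]; exact Matrix.PosSemidef.zero⟩
  · constructor
    · rintro ⟨X, hX⟩
      have hker : ∀ w, Aᴴ *ᵥ w = 0 → w = 0 := fun w hw => by
        by_contra hw0
        have h0 := hX.dotProduct_mulVec_pos hw0
        rw [key_quad A X B hw] at h0
        have h1 := dotProduct_star_self_nonneg (Bᴴ *ᵥ w)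
        exact absurd h0 (neg_nonpos.mpr h1).not_gt
      have hinj : Function.Injective Aᴴ.mulVecLin := by
        rw [← LinearMap.ker_eq_bot]
        exact Matrix.ker_mulVecLin_eq_bot_iff.mpr hker
      have hr : Aᴴ.rank = m := by
        rw [Matrix.rank, LinearMap.finrank_range_of_inj hinj]
        simp
      rw [← Matrix.rank_conjTranspose]
      exact hr
    · intro hr
      have htop : LinearMap.range A.mulVecLin = ⊤ := by
        apply Submodule.eq_top_of_finrank_eq
        have h1 : Module.finrank ℂ ↥(LinearMap.range A.mulVecLin) = A.rank := rfl
        rw [h1, hr]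
        simp
      have hPpsd : (B * Bᴴ + 1).PosSemidef :=
        (Matrix.posSemidef_self_mul_conjTranspose B).add Matrix.PosDef.one.posSemidef
      obtain ⟨C, hC⟩ := exists_mul_eq' A (CFC.sqrt (B * Bᴴ + 1)) (htop ▸ le_top)
      obtain ⟨X, hXeq⟩ := existsX A C
      refine ⟨X, ?_⟩
      have hDD : (A * C) * (A * C)ᴴ = B * Bᴴ + 1 := by
        rw [hC, (CFC.sqrt_nonneg (B * Bᴴ + 1)).posSemidef.1, CFC.sqrt_mul_sqrt_self _ hPpsd.nonneg]
      rw [hXeq, hDD, add_sub_cancel_left]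
      exact Matrix.PosDef.one
end
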